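/- arXiv:1506.08693 — 3 statements merged into one kernel-verified Lean document; each statement's English description precedes it below -/
import Mathlib

section
/- Every connected unipotent subgroup of O(1,n-1) fixes a nonzero isotropic vector: if u' is a Lie subalgebra of o(1,n-1) consisting of nilpotent matrices, then there exists a nonzero vector v ∈ R^{1,n-1} with q(v) = 0 and X(v) = 0 for all X ∈ u'. -/
def minkB (n : ℕ) (v w : Fin n → ℝ) : ℝ :=
  ∑ i : Fin n, (if (i : ℕ) = 0 then (-1 : ℝ) else 1) * v i * w i

attribute [local instance 100] LieRing.ofAssociativeRing

noncomputable def minkBF (n : ℕ) : LinearMap.BilinForm ℝ (Fin n → ℝ) :=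
  LinearMap.mk₂ ℝ (minkB n)
    (by intro v v' w; simp [minkB, add_mul, mul_add, Finset.sum_add_distrib])
    (by intro c v w; simp [minkB, Finset.mul_sum]; exact Finset.sum_congr rfl fun i _ => by split <;> ring)
    (by intro v w w'; simp [minkB, mul_add, Finset.sum_add_distrib])
    (by intro c v w; simp [minkB, Finset.mul_sum]; exact Finset.sum_congr rfl fun i _ => by split <;> ring)

lemma minkBF_apply (n : ℕ) (v w : Fin n → ℝ) : minkBF n v w = minkB n v w := rfl

lemma minkBF_symm (n : ℕ) : (minkBF n).IsSymm := by
  rw [LinearMap.BilinForm.isSymm_def]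
  intro v w
  simp only [minkBF_apply, minkB, RingHom.id_apply]
  exact Finset.sum_congr rfl fun i _ => by ring

lemma minkBF_nondeg (n : ℕ) : (minkBF n).Nondegenerate := by
  refine ⟨fun v hv => ?_, fun v hv => ?_⟩
  all_goals
    funext i
    have := hv (Pi.single i 1)
    simp only [minkBF_apply, minkB] at this
    rw [Finset.sum_eq_single i] at this
    · by_cases h : (i : ℕ) = 0 <;> simp_all
    · intro j _ hj; simp [Pi.single_apply, hj]
    · simp

set_option maxHeartbeats 1000000 in
/-- Every connected unipotent subgroup of `O(1,n-1)` fixes a nonzero isotropic vector: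
if `u'` is a Lie subalgebra of `o(1,n-1)` (linear maps skew-symmetric for the Lorentzian
form) all of whose elements are nilpotent endomorphisms, then there is a nonzero vector
`v` with `q(v) = 0` annihilated by every element of `u'`. -/
theorem unipotent_subalgebra_fixes_isotropic_vector (n : ℕ) (hn : 2 ≤ n)
    (u' : LieSubalgebra ℝ (Module.End ℝ (Fin n → ℝ)))
    (hskew : ∀ X ∈ u', ∀ v w : Fin n → ℝ, minkB n (X v) w + minkB n v (X w) = 0)
    (hnil : ∀ X ∈ u', IsNilpotent X) :
    ∃ v : Fin n → ℝ, v ≠ 0 ∧ minkB n v v = 0 ∧ ∀ X ∈ u', X v = 0 := by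
  classical
  set E : Submodule ℝ (Fin n → ℝ) :=
    { carrier := {v | ∀ X ∈ u', X v = 0}
      add_mem' := fun {a b} ha hb X hX => by simp [map_add, ha X hX, hb X hX]
      zero_mem' := fun X hX => by simp
      smul_mem' := fun c a ha X hX => by simp [map_smul, ha X hX] } with hEdef
  have hEmem : ∀ v, v ∈ E ↔ ∀ X ∈ u', X v = 0 := fun v => Iff.rfl
  by_cases htop : E = ⊤
  · -- every element of u' is zero; use e₀ + e₁
    set i0 : Fin n := ⟨0, by omega⟩
    set i1 : Fin n := ⟨1, by omega⟩
    have hne : i0 ≠ i1 := by simp [i0, i1, Fin.ext_iff]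
    set v : Fin n → ℝ := Pi.single i0 1 + Pi.single i1 1 with hv
    refine ⟨v, ?_, ?_, ?_⟩
    · intro h
      have := congrFun h i0
      simp [hv, Pi.single_apply, hne, hne.symm] at this
    · have hfun : ∀ i : Fin n, (if (i : ℕ) = 0 then (-1 : ℝ) else 1) * v i * v i
          = (Pi.single i0 (-1) + Pi.single i1 1 : Fin n → ℝ) i := by
        intro i
        by_cases h0 : i = i0
        · subst h0; simp [hv, Pi.single_apply, hne.symm, i0]
        · by_cases h1 : i = i1
          · subst h1; simp [hv, Pi.single_apply, hne, i1, i0]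
          · have : (i : ℕ) ≠ 0 := by
              intro hc; exact h0 (by simp [i0, Fin.ext_iff, hc])
            simp [hv, Pi.single_apply, Ne.symm h0, Ne.symm h1, this]
      unfold minkB
      rw [Finset.sum_congr rfl fun i _ => hfun i]
      simp [Finset.sum_add_distrib]
    · intro X hX
      have : v ∈ E := htop ▸ Submodule.mem_top
      exact (hEmem v).mp this X hX
  · set W : Submodule ℝ (Fin n → ℝ) := (minkBF n).orthogonal E with hWdef
    have hrefl : (minkBF n).IsRefl := (minkBF_symm n).isRefl
    -- W is nontrivial
    have hfr : Module.finrank ℝ W = n - Module.finrank ℝ E := by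
      rw [hWdef, LinearMap.BilinForm.finrank_orthogonal (minkBF_nondeg n),
        Module.finrank_fin_fun]
    have hElt : Module.finrank ℝ E < n := by
      have := Submodule.finrank_lt (K := ℝ) (V := Fin n → ℝ) htop
      rwa [Module.finrank_fin_fun] at this
    have hWpos : 0 < Module.finrank ℝ W := by omega
    have hWnt : Nontrivial W := Module.finrank_pos_iff.mp hWpos
    -- W is invariant under u'
    have hWinv : ∀ X ∈ u', ∀ w ∈ W, X w ∈ W := by
      intro X hX w hw
      rw [hWdef, LinearMap.BilinForm.mem_orthogonal_iff]
      intro e he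
      have hXe : X e = 0 := (hEmem e).mp he X hX
      have := hskew X hX e w
      rw [hXe] at this
      simp only [minkB, mul_zero, zero_mul, Finset.sum_const_zero, zero_add] at this
      show minkBF n e (X w) = 0
      rw [minkBF_apply]
      convert this using 2
      simp [minkB]
    -- make W a Lie submodule over u'
    let W' : LieSubmodule ℝ u' (Fin n → ℝ) :=
      { W with
        lie_mem := by
          intro x m hm
          show ⁅x, m⁆ ∈ W
          rw [LieSubalgebra.coe_bracket_of_module, Module.End.lie_apply]
          exact hWinv x x.2 m hm }
    have hW'mem : ∀ m, m ∈ W' ↔ m ∈ W := fun m => Iff.rfl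
    haveI : Nontrivial W' := hWnt
    haveI : LieModule.IsNilpotent u' W' := by
      apply LieAlgebra.isEngelian_of_isNoetherian (R := ℝ) W'
      intro x
      obtain ⟨k, hk⟩ := hnil (x : Module.End ℝ (Fin n → ℝ)) x.2
      refine ⟨k, ?_⟩
      have hco : ∀ m' : W', (((LieModule.toEnd ℝ u' W' x) m' : Fin n → ℝ)) =
          (x : Module.End ℝ (Fin n → ℝ)) (m' : Fin n → ℝ) := by
        intro m'
        rw [LieModule.toEnd_apply_apply, LieSubmodule.coe_bracket,
          LieSubalgebra.coe_bracket_of_module, Module.End.lie_apply]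
      have key : ∀ (j : ℕ) (m : W'),
          (((LieModule.toEnd ℝ u' W' x ^ j) m : Fin n → ℝ)) =
            ((x : Module.End ℝ (Fin n → ℝ)) ^ j) (m : Fin n → ℝ) := by
        intro j
        induction j with
        | zero => intro m; simp
        | succ j ih =>
          intro m
          rw [pow_succ, pow_succ]
          simp only [Module.End.mul_apply, hco, ih]
      apply LinearMap.ext
      intro m
      apply Subtype.ext
      rw [LinearMap.zero_apply]
      rw [show ((0 : W') : Fin n → ℝ) = 0 from rfl, key k m, hk]
      simp
    haveI := LieModule.nontrivial_max_triv_of_isNilpotent ℝ u' W'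
    obtain ⟨m, hm0⟩ := exists_ne (0 : LieModule.maxTrivSubmodule ℝ u' W')
    have hmtriv : ∀ x : u', ⁅x, (m : W')⁆ = 0 := (LieModule.mem_maxTrivSubmodule ℝ u' W' _).mp m.2
    set w : Fin n → ℝ := ((m : W') : Fin n → ℝ) with hwdef
    have hwW : w ∈ W := (m : W').2
    have hann : ∀ X ∈ u', X w = 0 := by
      intro X hX
      have := hmtriv ⟨X, hX⟩
      have h2 : (↑(⁅(⟨X, hX⟩ : u'), (m : W')⁆ : W') : Fin n → ℝ) = X w := by
        rw [LieSubmodule.coe_bracket, LieSubalgebra.coe_bracket_of_module, Module.End.lie_apply]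
      rw [this] at h2
      simpa using h2.symm
    have hwE : w ∈ E := (hEmem w).mpr hann
    refine ⟨w, ?_, ?_, hann⟩
    · intro hc
      apply hm0
      ext
      simp [hwdef] at hc
      simp [hc]
    · have := ((LinearMap.BilinForm.mem_orthogonal_iff).mp (hWdef ▸ hwW)) w hwE
      rwa [minkBF_apply] at this
end

section
/- There is no surjective Lie algebra homomorphism from any Lie subalgebra u of R ⋉ heis^C(2n-3) onto the quaternionic Heisenberg Lie algebra heis^H(7). -/
noncomputable section

/-! ### The semidirect product `ℝ ⋉ heis^ℂ(2m+1)` -/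

/-- Underlying space of the semidirect product `ℝ ⋉ heis^ℂ(2m+1)` (with
`heis^ℂ(2m+1) = ℂ^m ⊕ ℝ·Z`); for `m = n-2` this is `ℝ ⋉ heis^ℂ(2n-3)`. -/
def SDHeisC (m : ℕ) : Type := ℝ × (Fin m → ℂ) × ℝ

namespace SDHeisC

variable {m : ℕ}

instance : AddCommGroup (SDHeisC m) :=
  inferInstanceAs (AddCommGroup (ℝ × (Fin m → ℂ) × ℝ))

instance : Module ℝ (SDHeisC m) :=
  inferInstanceAs (Module ℝ (ℝ × (Fin m → ℂ) × ℝ))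

/-- The standard symplectic form on `ℂ^m ≅ ℝ^{2m}`. -/
def omegaC (z w : Fin m → ℂ) : ℝ := ∑ i, (z i * (starRingEnd ℂ) (w i)).im

/-- The derivation of `heis^ℂ(2m+1)` given by `(u + iv) + αZ ↦ v + 0·Z`. -/
def Dmap (z : Fin m → ℂ) : Fin m → ℂ := fun i => ((z i).im : ℂ)

lemma omegaC_add_left (z z' w : Fin m → ℂ) :
    omegaC (z + z') w = omegaC z w + omegaC z' w := by
  simp [omegaC, add_mul, Finset.sum_add_distrib]

lemma omegaC_add_right (z w w' : Fin m → ℂ) :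
    omegaC z (w + w') = omegaC z w + omegaC z w' := by
  simp [omegaC, mul_add, Finset.sum_add_distrib]

lemma omegaC_smul_left (t : ℝ) (z w : Fin m → ℂ) :
    omegaC (t • z) w = t * omegaC z w := by
  simp [omegaC, Pi.smul_apply, Complex.real_smul, mul_assoc, Finset.mul_sum]

lemma omegaC_smul_right (t : ℝ) (z w : Fin m → ℂ) :
    omegaC z (t • w) = t * omegaC z w := by
  simp only [omegaC, Pi.smul_apply, Complex.real_smul, map_mul, Complex.conj_ofReal,
    Finset.mul_sum]
  refine Finset.sum_congr rfl fun i _ => ?_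
  rw [mul_left_comm]
  simp [Complex.mul_im]

lemma omegaC_neg_right (z w : Fin m → ℂ) : omegaC z (-w) = -omegaC z w := by
  simp only [omegaC, Pi.neg_apply, map_neg, mul_neg, Complex.neg_im,
    Finset.sum_neg_distrib]

lemma omegaC_sub_right (z w w' : Fin m → ℂ) :
    omegaC z (w - w') = omegaC z w - omegaC z w' := by
  rw [sub_eq_add_neg, omegaC_add_right, omegaC_neg_right, sub_eq_add_neg]

lemma omegaC_neg_left (z w : Fin m → ℂ) : omegaC (-z) w = -omegaC z w := by
  simp only [omegaC, Pi.neg_apply, neg_mul, Complex.neg_im, Finset.sum_neg_distrib]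

lemma omegaC_sub_left (z z' w : Fin m → ℂ) :
    omegaC (z - z') w = omegaC z w - omegaC z' w := by
  rw [sub_eq_add_neg, omegaC_add_left, omegaC_neg_left, sub_eq_add_neg]

lemma omegaC_self (z : Fin m → ℂ) : omegaC z z = 0 := by
  simp [omegaC, Complex.mul_conj]

lemma omegaC_zero_left (w : Fin m → ℂ) : omegaC 0 w = 0 := by simp [omegaC]

lemma omegaC_zero_right (z : Fin m → ℂ) : omegaC z 0 = 0 := by simp [omegaC]

lemma Dmap_add (z w : Fin m → ℂ) : Dmap (z + w) = Dmap z + Dmap w := by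
  funext i; simp [Dmap]

lemma Dmap_smul (t : ℝ) (z : Fin m → ℂ) : Dmap (t • z) = t • Dmap z := by
  funext i
  simp [Dmap, Complex.real_smul, Complex.mul_im]

lemma Dmap_sub (z w : Fin m → ℂ) : Dmap (z - w) = Dmap z - Dmap w := by
  funext i; simp [Dmap]

lemma Dmap_zero : Dmap (0 : Fin m → ℂ) = 0 := by funext i; simp [Dmap]

lemma Dmap_Dmap (z : Fin m → ℂ) : Dmap (Dmap z) = 0 := by
  funext i; simp [Dmap]

lemma omegaC_Dmap_right (z w : Fin m → ℂ) :
    omegaC z (Dmap w) = ∑ i, (w i).im * (z i).im := by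
  simp only [omegaC, Dmap]
  refine Finset.sum_congr rfl fun i _ => ?_
  rw [Complex.conj_ofReal]
  simp [Complex.mul_im, mul_comm]

lemma omegaC_Dmap_left (z w : Fin m → ℂ) :
    omegaC (Dmap z) w = -omegaC z (Dmap w) := by
  rw [omegaC_Dmap_right]
  simp only [omegaC, Dmap, ← Finset.sum_neg_distrib]
  refine Finset.sum_congr rfl fun i _ => ?_
  simp only [Complex.mul_im, Complex.ofReal_re, Complex.ofReal_im, Complex.conj_re,
    Complex.conj_im]
  ring

lemma omegaC_Dmap_symm (z w : Fin m → ℂ) :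
    omegaC z (Dmap w) = omegaC w (Dmap z) := by
  rw [omegaC_Dmap_right, omegaC_Dmap_right]
  exact Finset.sum_congr rfl fun i _ => by ring

@[simp] lemma fst_add (x y : SDHeisC m) : (x + y).1 = x.1 + y.1 := rfl
@[simp] lemma snd_fst_add (x y : SDHeisC m) : (x + y).2.1 = x.2.1 + y.2.1 := rfl
@[simp] lemma snd_snd_add (x y : SDHeisC m) : (x + y).2.2 = x.2.2 + y.2.2 := rfl
@[simp] lemma fst_smul (t : ℝ) (x : SDHeisC m) : (t • x).1 = t • x.1 := rfl
@[simp] lemma snd_fst_smul (t : ℝ) (x : SDHeisC m) : (t • x).2.1 = t • x.2.1 := rfl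
@[simp] lemma snd_snd_smul (t : ℝ) (x : SDHeisC m) : (t • x).2.2 = t • x.2.2 := rfl
@[simp] lemma fst_zero : (0 : SDHeisC m).1 = 0 := rfl
@[simp] lemma snd_fst_zero : (0 : SDHeisC m).2.1 = 0 := rfl
@[simp] lemma snd_snd_zero : (0 : SDHeisC m).2.2 = 0 := rfl

/-- The Lie bracket of `ℝ ⋉ heis^ℂ(2m+1)`:
`[(t,z,α), (t',z',α')] = (0, t•D(z') - t'•D(z), ω_ℂ(z,z'))`, where `D` is the derivation
`(u + iv) + αZ ↦ v + 0·Z` of the Heisenberg ideal `{t = 0} ≅ heis^ℂ(2m+1)`. -/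
instance : LieRing (SDHeisC m) where
  bracket x y := (0, x.1 • Dmap y.2.1 - y.1 • Dmap x.2.1, omegaC x.2.1 y.2.1)
  add_lie x y z := by
    refine Prod.ext ?_ (Prod.ext ?_ ?_)
    · show (0 : ℝ) = 0 + 0
      simp
    · show (x + y).1 • Dmap z.2.1 - z.1 • Dmap ((x + y).2.1)
        = (x.1 • Dmap z.2.1 - z.1 • Dmap x.2.1) + (y.1 • Dmap z.2.1 - z.1 • Dmap y.2.1)
      rw [fst_add, snd_fst_add, Dmap_add, add_smul, smul_add]
      abel
    · show omegaC ((x + y).2.1) z.2.1 = omegaC x.2.1 z.2.1 + omegaC y.2.1 z.2.1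
      rw [snd_fst_add, omegaC_add_left]
  lie_add x y z := by
    refine Prod.ext ?_ (Prod.ext ?_ ?_)
    · show (0 : ℝ) = 0 + 0
      simp
    · show x.1 • Dmap ((y + z).2.1) - (y + z).1 • Dmap x.2.1
        = (x.1 • Dmap y.2.1 - y.1 • Dmap x.2.1) + (x.1 • Dmap z.2.1 - z.1 • Dmap x.2.1)
      rw [fst_add, snd_fst_add, Dmap_add, add_smul, smul_add]
      abel
    · show omegaC x.2.1 ((y + z).2.1) = omegaC x.2.1 y.2.1 + omegaC x.2.1 z.2.1
      rw [snd_fst_add, omegaC_add_right]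
  lie_self x := by
    refine Prod.ext ?_ (Prod.ext ?_ ?_)
    · rfl
    · show x.1 • Dmap x.2.1 - x.1 • Dmap x.2.1 = 0
      simp
    · exact omegaC_self x.2.1
  leibniz_lie x y z := by
    refine Prod.ext ?_ (Prod.ext ?_ ?_)
    · show (0 : ℝ) = 0 + 0
      simp
    · show x.1 • Dmap (y.1 • Dmap z.2.1 - z.1 • Dmap y.2.1) - (0 : ℝ) • Dmap x.2.1
        = ((0 : ℝ) • Dmap z.2.1 - z.1 • Dmap (x.1 • Dmap y.2.1 - y.1 • Dmap x.2.1))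
          + (y.1 • Dmap (x.1 • Dmap z.2.1 - z.1 • Dmap x.2.1) - (0 : ℝ) • Dmap y.2.1)
      simp [Dmap_sub, Dmap_smul, Dmap_Dmap]
    · show omegaC x.2.1 (y.1 • Dmap z.2.1 - z.1 • Dmap y.2.1)
        = omegaC (x.1 • Dmap y.2.1 - y.1 • Dmap x.2.1) z.2.1
          + omegaC y.2.1 (x.1 • Dmap z.2.1 - z.1 • Dmap x.2.1)
      rw [omegaC_sub_right, omegaC_sub_left, omegaC_sub_right, omegaC_smul_right,
        omegaC_smul_right, omegaC_smul_left, omegaC_smul_left, omegaC_smul_right,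
        omegaC_smul_right, omegaC_Dmap_left x.2.1 z.2.1, omegaC_Dmap_left y.2.1 z.2.1,
        omegaC_Dmap_symm y.2.1 x.2.1]
      ring


instance : LieAlgebra ℝ (SDHeisC m) where
  lie_smul t x y := by
    refine Prod.ext ?_ (Prod.ext ?_ ?_)
    · show (0 : ℝ) = t • (0 : ℝ)
      simp
    · show x.1 • Dmap ((t • y).2.1) - (t • y).1 • Dmap x.2.1
        = t • (x.1 • Dmap y.2.1 - y.1 • Dmap x.2.1)
      rw [fst_smul, snd_fst_smul, Dmap_smul]
      simp only [smul_eq_mul]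
      module
    · show omegaC x.2.1 ((t • y).2.1) = t • omegaC x.2.1 y.2.1
      rw [snd_fst_smul, omegaC_smul_right, smul_eq_mul]

end SDHeisC

/-! ### The quaternionic Heisenberg algebra `heis^ℍ(7)` -/

open Quaternion in
/-- The imaginary-part commutator `q·q̄' - q'·q̄`, recorded as a vector in `ℝ³`. -/
def omegaH (q q' : ℍ[ℝ]) : Fin 3 → ℝ :=
  ![(q * star q' - q' * star q).imI, (q * star q' - q' * star q).imJ,
    (q * star q' - q' * star q).imK]

/-- Underlying space `ℍ ⊕ span(Z_i, Z_j, Z_k)` of the quaternionic Heisenberg Lie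
algebra `heis^ℍ(7)`. -/
def HeisH : Type := Quaternion ℝ × (Fin 3 → ℝ)

namespace HeisH

instance : AddCommGroup HeisH :=
  inferInstanceAs (AddCommGroup (Quaternion ℝ × (Fin 3 → ℝ)))

instance : Module ℝ HeisH :=
  inferInstanceAs (Module ℝ (Quaternion ℝ × (Fin 3 → ℝ)))

lemma omegaH_add_left (a b c : Quaternion ℝ) :
    omegaH (a + b) c = omegaH a c + omegaH b c := by
  funext i
  fin_cases i <;> simp [omegaH] <;> ring

lemma omegaH_add_right (a b c : Quaternion ℝ) :
    omegaH a (b + c) = omegaH a b + omegaH a c := by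
  funext i
  fin_cases i <;> simp [omegaH] <;> ring

lemma omegaH_smul_left (t : ℝ) (a b : Quaternion ℝ) :
    omegaH (t • a) b = t • omegaH a b := by
  funext i
  fin_cases i <;> simp [omegaH] <;> ring

lemma omegaH_smul_right (t : ℝ) (a b : Quaternion ℝ) :
    omegaH a (t • b) = t • omegaH a b := by
  funext i
  fin_cases i <;> simp [omegaH] <;> ring

lemma omegaH_self (a : Quaternion ℝ) : omegaH a a = 0 := by
  funext i
  fin_cases i <;> simp [omegaH] <;> rfl

lemma omegaH_zero_left (a : Quaternion ℝ) : omegaH 0 a = 0 := by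
  funext i
  fin_cases i <;> simp [omegaH] <;> rfl

lemma omegaH_zero_right (a : Quaternion ℝ) : omegaH a 0 = 0 := by
  funext i
  fin_cases i <;> simp [omegaH] <;> rfl

/-- The Lie bracket of `heis^ℍ(7)`: `[(q,z), (q',z')] = (0, ω_ℍ(q,q'))`, with center
`span(Z_i, Z_j, Z_k)`. -/
instance : LieRing HeisH where
  bracket x y := (0, omegaH x.1 y.1)
  add_lie x y z := by
    refine Prod.ext ?_ ?_
    · show (0 : Quaternion ℝ) = 0 + 0; simp
    · show omegaH (x + y).1 z.1 = omegaH x.1 z.1 + omegaH y.1 z.1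
      exact omegaH_add_left x.1 y.1 z.1
  lie_add x y z := by
    refine Prod.ext ?_ ?_
    · show (0 : Quaternion ℝ) = 0 + 0; simp
    · show omegaH x.1 (y + z).1 = omegaH x.1 y.1 + omegaH x.1 z.1
      exact omegaH_add_right x.1 y.1 z.1
  lie_self x := by
    refine Prod.ext ?_ ?_
    · rfl
    · exact omegaH_self x.1
  leibniz_lie x y z := by
    refine Prod.ext ?_ ?_
    · show (0 : Quaternion ℝ) = 0 + 0; simp
    · show omegaH x.1 (0 : Quaternion ℝ) = omegaH 0 z.1 + omegaH y.1 0
      rw [omegaH_zero_left, omegaH_zero_right, omegaH_zero_right]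
      simp

instance : LieAlgebra ℝ HeisH where
  lie_smul t x y := by
    refine Prod.ext ?_ ?_
    · show (0 : Quaternion ℝ) = t • 0; simp
    · show omegaH x.1 ((t • y).1) = t • omegaH x.1 y.1
      exact omegaH_smul_right t x.1 y.1

end HeisH

/-! ### Auxiliary lemmas for the main theorem -/

namespace SDHeisC

variable {m : ℕ}

@[simp] lemma fst_sub' (x y : SDHeisC m) : (x - y).1 = x.1 - y.1 := rfl
@[simp] lemma snd_fst_sub' (x y : SDHeisC m) : (x - y).2.1 = x.2.1 - y.2.1 := rfl

lemma bracket_def' (x y : SDHeisC m) :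
    ⁅x, y⁆ = ((0 : ℝ), x.1 • Dmap y.2.1 - y.1 • Dmap x.2.1, omegaC x.2.1 y.2.1) := rfl

end SDHeisC

namespace HeisH

@[simp] lemma fst_sub' (x y : HeisH) : (x - y).1 = x.1 - y.1 := rfl
@[simp] lemma fst_smul' (t : ℝ) (x : HeisH) : (t • x).1 = t • x.1 := rfl
@[simp] lemma fst_zero' : (0 : HeisH).1 = 0 := rfl
@[simp] lemma snd_zero' : (0 : HeisH).2 = 0 := rfl

lemma bracket_def' (x y : HeisH) :
    ⁅x, y⁆ = ((0 : Quaternion ℝ), omegaH x.1 y.1) := rfl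

lemma omegaH_neg_right (a b : Quaternion ℝ) : omegaH a (-b) = -omegaH a b := by
  have := omegaH_smul_right (-1 : ℝ) a b
  simpa using this

lemma omegaH_sub_right (a b c : Quaternion ℝ) :
    omegaH a (b - c) = omegaH a b - omegaH a c := by
  rw [sub_eq_add_neg, omegaH_add_right, omegaH_neg_right, sub_eq_add_neg]

end HeisH

lemma quat_comb_mk' (r s a b c d a' b' c' d' : ℝ) :
    @HSub.hSub (Quaternion ℝ) (Quaternion ℝ) (Quaternion ℝ) _
      (@HSMul.hSMul ℝ (Quaternion ℝ) (Quaternion ℝ) _ r ⟨a, b, c, d⟩)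
      (@HSMul.hSMul ℝ (Quaternion ℝ) (Quaternion ℝ) _ s ⟨a', b', c', d'⟩)
      = ⟨r * a - s * a', r * b - s * b', r * c - s * c', r * d - s * d'⟩ := rfl

lemma quat_comb_one' (r s a b c d : ℝ) :
    @HSub.hSub (Quaternion ℝ) (Quaternion ℝ) (Quaternion ℝ) _
      (@HSMul.hSMul ℝ (Quaternion ℝ) (Quaternion ℝ) _ r ⟨a, b, c, d⟩)
      (@HSMul.hSMul ℝ (Quaternion ℝ) (Quaternion ℝ) _ s 1)
      = ⟨r * a - s * 1, r * b - s * 0, r * c - s * 0, r * d - s * 0⟩ := rfl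

open Quaternion in
lemma omegaH_explicit (q q' : Quaternion ℝ) :
    omegaH q q' = ![2*(q.imI*q'.re - q.re*q'.imI + q.imK*q'.imJ - q.imJ*q'.imK),
                    2*(q.imJ*q'.re - q.re*q'.imJ + q.imI*q'.imK - q.imK*q'.imI),
                    2*(q.imK*q'.re - q.re*q'.imK + q.imJ*q'.imI - q.imI*q'.imJ)] := by
  funext i; fin_cases i <;>
    simp [omegaH, Quaternion.imI_mul, Quaternion.imJ_mul, Quaternion.imK_mul] <;> ring

/-- Key lemma: if `x, y, z` lie in a Lie subalgebra `u` of `ℝ ⋉ heis^ℂ`, all with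
vanishing `ℝ`-component, and the two vectors `ω_ℍ((f x)₁, (f y)₁)` and
`ω_ℍ((f x)₁, (f z)₁)` are linearly independent, we get a contradiction. -/
lemma key_lemma {m : ℕ} (u : LieSubalgebra ℝ (SDHeisC m)) (f : ↥u →ₗ⁅ℝ⁆ HeisH)
    (x y z : ↥u) (hx : (x : SDHeisC m).1 = 0) (hy : (y : SDHeisC m).1 = 0)
    (hz : (z : SDHeisC m).1 = 0)
    (hind : ∀ α β : ℝ,
      α • omegaH (f x).1 (f y).1 = β • omegaH (f x).1 (f z).1 → α = 0 ∧ β = 0) :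
    False := by
  classical
  set c1 := SDHeisC.omegaC (x : SDHeisC m).2.1 (y : SDHeisC m).2.1 with hc1
  set c2 := SDHeisC.omegaC (x : SDHeisC m).2.1 (z : SDHeisC m).2.1 with hc2
  -- if `w` has zero `ℝ`-component and `ω_ℂ(x, w) = 0`, then `⁅x, w⁆ = 0`, so
  -- `ω_ℍ((f x)₁, (f w)₁) = 0`.
  have hbr : ∀ w : ↥u, (w : SDHeisC m).1 = 0 →
      SDHeisC.omegaC (x : SDHeisC m).2.1 (w : SDHeisC m).2.1 = 0 →
      omegaH (f x).1 (f w).1 = 0 := by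
    intro w hw hcw
    have hb : ⁅x, w⁆ = (0 : ↥u) := by
      apply Subtype.ext
      rw [LieSubalgebra.coe_bracket, SDHeisC.bracket_def']
      refine Prod.ext ?_ (Prod.ext ?_ ?_) <;> simp [hx, hw, hcw]
    have h0 : ⁅f x, f w⁆ = 0 := by rw [← f.map_lie, hb, map_zero]
    have h1 := congrArg Prod.snd h0
    rw [HeisH.bracket_def'] at h1
    simpa using h1
  -- the orthogonalized element `s`
  set s : ↥u := c2 • y - c1 • z with hs
  have hcoe : ((s : ↥u) : SDHeisC m)
      = c2 • (y : SDHeisC m) - c1 • (z : SDHeisC m) := rfl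
  have hs1 : (s : SDHeisC m).1 = 0 := by
    rw [hcoe]; simp [hy, hz]
  have hsc : (s : SDHeisC m).2.1
      = c2 • (y : SDHeisC m).2.1 - c1 • (z : SDHeisC m).2.1 := by
    rw [hcoe]; simp
  have hs2 : SDHeisC.omegaC (x : SDHeisC m).2.1 (s : SDHeisC m).2.1 = 0 := by
    rw [hsc, SDHeisC.omegaC_sub_right, SDHeisC.omegaC_smul_right,
      SDHeisC.omegaC_smul_right, ← hc1, ← hc2]
    ring
  have hfs : (f s).1 = c2 • (f y).1 - c1 • (f z).1 := by
    rw [hs, map_sub, map_smul, map_smul]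
    simp
  have h3 : c2 • omegaH (f x).1 (f y).1 - c1 • omegaH (f x).1 (f z).1 = 0 := by
    have h4 := hbr s hs1 hs2
    rw [hfs, HeisH.omegaH_sub_right, HeisH.omegaH_smul_right,
      HeisH.omegaH_smul_right] at h4
    exact h4
  have h5 : c2 • omegaH (f x).1 (f y).1 = c1 • omegaH (f x).1 (f z).1 :=
    sub_eq_zero.mp h3
  obtain ⟨hc2z, hc1z⟩ := hind c2 c1 h5
  have hV1 : omegaH (f x).1 (f y).1 = 0 := hbr y hy (by rw [← hc1, hc1z])
  have : (1 : ℝ) = 0 := (hind 1 0 (by rw [hV1]; simp)).1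
  norm_num at this

/-- There is no surjective Lie algebra homomorphism from any Lie subalgebra `u` of
`ℝ ⋉ heis^ℂ(2n-3)` onto the quaternionic Heisenberg Lie algebra `heis^ℍ(7)`. -/
theorem no_surjection_onto_heisH (n : ℕ) (hn : 3 ≤ n)
    (u : LieSubalgebra ℝ (SDHeisC (n - 2))) (f : ↥u →ₗ⁅ℝ⁆ HeisH) :
    ¬ Function.Surjective f := by
  intro hf
  obtain ⟨a, ha⟩ := hf ⟨(1 : Quaternion ℝ), 0⟩
  obtain ⟨b, hb⟩ := hf ⟨(⟨0,1,0,0⟩ : Quaternion ℝ), 0⟩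
  obtain ⟨c, hc⟩ := hf ⟨(⟨0,0,1,0⟩ : Quaternion ℝ), 0⟩
  obtain ⟨d, hd⟩ := hf ⟨(⟨0,0,0,1⟩ : Quaternion ℝ), 0⟩
  set ta := ((a : SDHeisC (n - 2))).1 with hta
  set tb := ((b : SDHeisC (n - 2))).1 with htb
  set tc := ((c : SDHeisC (n - 2))).1 with htc
  set td := ((d : SDHeisC (n - 2))).1 with htd
  -- first coordinate of a combination
  have hco : ∀ (r s : ℝ) (p q : ↥u),
      ((↑(r • p - s • q) : SDHeisC (n - 2))).1
        = r * ((p : SDHeisC (n - 2))).1 - s * ((q : SDHeisC (n - 2))).1 := by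
    intro r s p q
    have : ((↑(r • p - s • q) : SDHeisC (n - 2)))
        = r • (p : SDHeisC (n - 2)) - s • (q : SDHeisC (n - 2)) := rfl
    rw [this]; simp
  -- quaternion part of the image of a combination
  have hfq : ∀ (r s : ℝ) (p q : ↥u) (Q Q' : Quaternion ℝ),
      f p = ⟨Q, 0⟩ → f q = ⟨Q', 0⟩ →
      (f (r • p - s • q)).1 = r • Q - s • Q' := by
    intro r s p q Q Q' hp hq
    rw [map_sub, map_smul, map_smul, hp, hq]
    rfl
  by_cases h1 : ta ≠ 0
  · -- use x = ta•b - tb•a, y = ta•c - tc•a, z = ta•d - td•a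
    refine key_lemma u f (ta • b - tb • a) (ta • c - tc • a) (ta • d - td • a)
      (by rw [hco]; ring) (by rw [hco]; ring) (by rw [hco]; ring) ?_
    intro α β h
    rw [hfq ta tb b a _ _ hb ha, hfq ta tc c a _ _ hc ha, hfq ta td d a _ _ hd ha,
      omegaH_explicit, omegaH_explicit] at h
    have e1 := congrFun h 1
    have e2 := congrFun h 2
    simp [Quaternion.ext_iff, Quaternion.re_one, Quaternion.imI_one, Quaternion.imJ_one, Quaternion.imK_one, quat_comb_mk', quat_comb_one'] at e1 e2
    have hA : α * (ta * (ta ^ 2 + tb ^ 2)) = 0 := by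
      linear_combination (tb / 2) * e1 - (ta / 2) * e2
    have hB : β * (ta * (ta ^ 2 + tb ^ 2)) = 0 := by
      linear_combination (-ta / 2) * e1 - (tb / 2) * e2
    have hsq : 0 < ta ^ 2 :=
      lt_of_le_of_ne (sq_nonneg ta) (Ne.symm (pow_ne_zero 2 h1))
    have ht : ta * (ta ^ 2 + tb ^ 2) ≠ 0 :=
      mul_ne_zero h1 (ne_of_gt (by nlinarith [sq_nonneg tb]))
    exact ⟨(mul_eq_zero.mp hA).resolve_right ht, (mul_eq_zero.mp hB).resolve_right ht⟩
  · push_neg at h1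
    by_cases h2 : tb ≠ 0
    · refine key_lemma u f a (tb • c - tc • b) (tb • d - td • b)
        h1 (by rw [hco]; ring) (by rw [hco]; ring) ?_
      intro α β h
      rw [ha, hfq tb tc c b _ _ hc hb, hfq tb td d b _ _ hd hb,
        omegaH_explicit, omegaH_explicit] at h
      have e1 := congrFun h 1
      have e2 := congrFun h 2
      simp [Quaternion.ext_iff, Quaternion.re_one, Quaternion.imI_one, Quaternion.imJ_one, Quaternion.imK_one, quat_comb_mk', quat_comb_one'] at e1 e2
      exact ⟨e1.resolve_right h2, e2.resolve_right h2⟩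
    · push_neg at h2
      by_cases h3 : tc ≠ 0
      · refine key_lemma u f a b (tc • d - td • c)
          h1 h2 (by rw [hco]; ring) ?_
        intro α β h
        rw [ha, hb, hfq tc td d c _ _ hd hc, omegaH_explicit, omegaH_explicit] at h
        have e0 := congrFun h 0
        have e2 := congrFun h 2
        simp [Quaternion.ext_iff, Quaternion.re_one, Quaternion.imI_one, Quaternion.imJ_one, Quaternion.imK_one, quat_comb_mk', quat_comb_one'] at e0 e2
        exact ⟨e0, e2.resolve_right h3⟩
      · push_neg at h3
        refine key_lemma u f a b c h1 h2 h3 ?_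
        intro α β h
        rw [ha, hb, hc, omegaH_explicit, omegaH_explicit] at h
        have e0 := congrFun h 0
        have e1 := congrFun h 1
        simp [Quaternion.ext_iff, Quaternion.re_one, Quaternion.imI_one, Quaternion.imJ_one, Quaternion.imK_one, quat_comb_mk', quat_comb_one'] at e0 e1
        exact ⟨e0, e1⟩
end
end

section
/- If h' is a Lie subalgebra of o(1,k) (k ≥ 2) satisfying [h_α, h'] ⊆ h' and h' ∩ h_{-α} ≠ 0, then h' = o(1,k). -/
open Matrix

/-- Index set for blocks of sizes `1, k-1, 1` (here `m = k-1`, `k ≥ 2`). -/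
abbrev Idx (m : ℕ) := Fin 1 ⊕ Fin m ⊕ Fin 1

/-- The antidiagonal-type Lorentz form matrix `J_{1,k}`. -/
def lorJ (m : ℕ) : Matrix (Idx m) (Idx m) ℝ := fun i j =>
  match i, j with
  | Sum.inl _, Sum.inr (Sum.inr _) => 1
  | Sum.inr (Sum.inr _), Sum.inl _ => 1
  | Sum.inr (Sum.inl i), Sum.inr (Sum.inl j) => if i = j then 1 else 0
  | _, _ => 0

/-- Element of the negative root space `h_{-α}` of `o(1,k)`, parametrized by `v ∈ ℝ^{k-1}`. -/
def Yneg (m : ℕ) (v : Fin m → ℝ) : Matrix (Idx m) (Idx m) ℝ := fun i j =>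
  match i, j with
  | Sum.inr (Sum.inl i), Sum.inl _ => -v i
  | Sum.inr (Sum.inr _), Sum.inr (Sum.inl j) => v j
  | _, _ => 0

/-- Element of the positive root space `h_α` of `o(1,k)`, parametrized by `u ∈ ℝ^{k-1}`. -/
def Upos (m : ℕ) (u : Fin m → ℝ) : Matrix (Idx m) (Idx m) ℝ := fun i j =>
  match i, j with
  | Sum.inl _, Sum.inr (Sum.inl j) => u j
  | Sum.inr (Sum.inl i), Sum.inr (Sum.inr _) => -u i
  | _, _ => 0

def Dmat (m : ℕ) (a : ℝ) (A : Matrix (Fin m) (Fin m) ℝ) : Matrix (Idx m) (Idx m) ℝ := fun i j =>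
  match i, j with
  | Sum.inl _, Sum.inl _ => a
  | Sum.inr (Sum.inl i), Sum.inr (Sum.inl j) => A i j
  | Sum.inr (Sum.inr _), Sum.inr (Sum.inr _) => -a
  | _, _ => 0

lemma bracket1 (m : ℕ) (u v : Fin m → ℝ) :
    ⁅Upos m u, Yneg m v⁆ =
      Dmat m (-(∑ i, u i * v i)) (fun i j => v i * u j - u i * v j) := by
  ext i j
  rcases i with i | i | i <;> rcases j with j | j | j <;>
    simp [Ring.lie_def, Matrix.mul_apply, Fintype.sum_sum_type, Upos, Yneg, Dmat,
      Matrix.sub_apply, Finset.sum_sub_distrib, Finset.mul_sum, mul_comm] <;> ring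


lemma bracket2 (m : ℕ) (a : ℝ) (A : Matrix (Fin m) (Fin m) ℝ)
    (hA : ∀ i j, A j i = -A i j) (w : Fin m → ℝ) :
    ⁅Dmat m a A, Yneg m w⁆ = Yneg m (fun i => (∑ j, A i j * w j) - a * w i) := by
  have hs : ∀ j : Fin m, ∑ k, w k * A k j = -∑ k, A j k * w k := by
    intro j
    rw [← Finset.sum_neg_distrib]
    exact Finset.sum_congr rfl fun k _ => by rw [hA j k]; ring
  ext i j
  rcases i with i | i | i <;> rcases j with j | j | j <;>
    simp [Ring.lie_def, Matrix.mul_apply, Fintype.sum_sum_type, Upos, Yneg, Dmat,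
      Finset.sum_sub_distrib, Finset.mul_sum] <;> try ring
  rw [hs]; ring

lemma bracket3 (m : ℕ) (a : ℝ) (A : Matrix (Fin m) (Fin m) ℝ)
    (hA : ∀ i j, A j i = -A i j) (u : Fin m → ℝ) :
    ⁅Upos m u, Dmat m a A⁆ = Upos m (fun i => -(a * u i) - ∑ j, A i j * u j) := by
  have hs : ∀ j : Fin m, ∑ k, u k * A k j = -∑ k, A j k * u k := by
    intro j
    rw [← Finset.sum_neg_distrib]
    exact Finset.sum_congr rfl fun k _ => by rw [hA j k]; ring
  ext i j
  rcases i with i | i | i <;> rcases j with j | j | j <;>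
    simp [Ring.lie_def, Matrix.mul_apply, Fintype.sum_sum_type, Upos, Yneg, Dmat,
      Finset.sum_sub_distrib, Finset.mul_sum] <;> try ring
  rw [hs]; ring

lemma Yneg_smul (m : ℕ) (c : ℝ) (v : Fin m → ℝ) : Yneg m (c • v) = c • Yneg m v := by
  ext i j
  rcases i with i | i | i <;> rcases j with j | j | j <;>
    simp [Yneg, Matrix.smul_apply, smul_eq_mul] <;> ring

lemma Yneg_sub (m : ℕ) (v w : Fin m → ℝ) : Yneg m (v - w) = Yneg m v - Yneg m w := by
  ext i j
  rcases i with i | i | i <;> rcases j with j | j | j <;>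
    simp [Yneg, Matrix.sub_apply] <;> ring

lemma Upos_smul (m : ℕ) (c : ℝ) (u : Fin m → ℝ) : Upos m (c • u) = c • Upos m u := by
  ext i j
  rcases i with i | i | i <;> rcases j with j | j | j <;>
    simp [Upos, Matrix.smul_apply, smul_eq_mul] <;> ring

lemma Dmat_eq (m : ℕ) (a : ℝ) (A : Matrix (Fin m) (Fin m) ℝ) :
    Dmat m a A = a • Dmat m 1 0 + Dmat m 0 A := by
  ext i j
  rcases i with i | i | i <;> rcases j with j | j | j <;>
    simp [Dmat, Matrix.add_apply, Matrix.smul_apply, smul_eq_mul]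

/-- standard basis vector -/
def ev (m : ℕ) (i : Fin m) : Fin m → ℝ := fun k => if k = i then 1 else 0

lemma anti_decomp (m : ℕ) (A : Matrix (Fin m) (Fin m) ℝ) (hA : ∀ i j, A j i = -A i j) :
    Dmat m 0 A = ∑ i : Fin m, ∑ j : Fin m,
      (A j i / 2) • Dmat m 0 (fun k l => ev m j k * ev m i l - ev m i k * ev m j l) := by
  ext p q
  rw [Matrix.sum_apply]
  simp only [Matrix.sum_apply, Matrix.smul_apply, smul_eq_mul]
  rcases p with p | p | p <;> rcases q with q | q | q <;>
    simp [Dmat, ev, mul_sub, Finset.sum_sub_distrib, mul_ite, mul_one, mul_zero,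
      Finset.sum_ite_eq, Finset.sum_ite_eq']
  rw [hA q p]
  ring

/-- If `h'` is a Lie subalgebra of `o(1,k)` (`k = m+1 ≥ 2`) with `[h_α, h'] ⊆ h'` and
`h' ∩ h_{-α} ≠ 0`, then `h' = o(1,k)`. -/
theorem subalgebra_meeting_hneg_is_full (m : ℕ) (hm : 1 ≤ m)
    (h' : Submodule ℝ (Matrix (Idx m) (Idx m) ℝ))
    (hsub : ∀ M ∈ h', Mᵀ * lorJ m + lorJ m * M = 0)
    (hbr : ∀ M ∈ h', ∀ M' ∈ h', ⁅M, M'⁆ ∈ h')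
    (hstab : ∀ u : Fin m → ℝ, ∀ M ∈ h', ⁅Upos m u, M⁆ ∈ h')
    (hmeet : ∃ v : Fin m → ℝ, v ≠ 0 ∧ Yneg m v ∈ h') :
    ∀ M : Matrix (Idx m) (Idx m) ℝ, Mᵀ * lorJ m + lorJ m * M = 0 → M ∈ h' := by
  obtain ⟨v, hv0, hv⟩ := hmeet
  have hcpos : (0:ℝ) < ∑ i, v i * v i := by
    obtain ⟨i, hi⟩ := Function.ne_iff.mp hv0
    exact Finset.sum_pos' (fun k _ => mul_self_nonneg _)
      ⟨i, Finset.mem_univ i, mul_self_pos.mpr hi⟩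
  set c : ℝ := ∑ i, v i * v i with hc
  -- Step A : all of h_{-α}
  have hY : ∀ u, Yneg m u ∈ h' := by
    intro u
    have h1 := hstab u _ hv
    rw [bracket1] at h1
    have h2 := hbr _ h1 _ hv
    rw [bracket2 m _ (fun i j => v i * u j - u i * v j) (by intro i j; ring) v] at h2
    have e : (fun i => (∑ j, (v i * u j - u i * v j) * v j) - -(∑ i, u i * v i) * v i)
        = (2 * ∑ j, u j * v j) • v - c • u := by
      funext i
      have s1 : ∑ j, (v i * u j - u i * v j) * v j
          = v i * (∑ j, u j * v j) - u i * c := by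
        rw [hc, Finset.mul_sum, Finset.mul_sum, ← Finset.sum_sub_distrib]
        exact Finset.sum_congr rfl fun j _ => by ring
      simp only [Pi.sub_apply, Pi.smul_apply, smul_eq_mul, s1]
      ring
    rw [e, Yneg_sub, Yneg_smul, Yneg_smul] at h2
    have h3 : c • Yneg m u ∈ h' := by
      simpa using h'.sub_mem (h'.smul_mem (2 * ∑ j, u j * v j) hv) h2
    have := h'.smul_mem c⁻¹ h3
    rwa [smul_smul, inv_mul_cancel₀ (ne_of_gt hcpos), one_smul] at this
  -- Step B : the element H ∈ h'
  have hH : Dmat m 1 0 ∈ h' := by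
    have h1 := hstab (ev m ⟨0, hm⟩) _ (hY (ev m ⟨0, hm⟩))
    erw [bracket1, Dmat_eq] at h1
    have e1 : (∑ i, ev m ⟨0, hm⟩ i * ev m ⟨0, hm⟩ i) = 1 := by
      simp [ev, Finset.sum_ite_eq, Finset.sum_ite_eq']
    have e2 : (fun i j => ev m ⟨0, hm⟩ i * ev m ⟨0, hm⟩ j - ev m ⟨0, hm⟩ i * ev m ⟨0, hm⟩ j)
        = (0 : Matrix (Fin m) (Fin m) ℝ) := by funext i j; simp
    have e3 : Dmat m 0 (0 : Matrix (Fin m) (Fin m) ℝ) = 0 := by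
      ext i j; rcases i with i|i|i <;> rcases j with j|j|j <;> simp [Dmat]
    rw [e1, e2, e3, add_zero] at h1
    simpa using h'.smul_mem (-1) h1
  -- Step C : the m part
  have hMid : ∀ A : Matrix (Fin m) (Fin m) ℝ, (∀ i j, A j i = -A i j) → Dmat m 0 A ∈ h' := by
    have hC : ∀ i j : Fin m,
        Dmat m 0 (fun k l => ev m j k * ev m i l - ev m i k * ev m j l) ∈ h' := by
      intro i j
      have h1 := hstab (ev m i) _ (hY (ev m j))
      erw [bracket1, Dmat_eq] at h1
      simpa using h'.sub_mem h1 (h'.smul_mem (-(∑ k, ev m i k * ev m j k)) hH)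
    intro A hA
    rw [anti_decomp m A hA]
    exact Submodule.sum_mem _ fun i _ => Submodule.sum_mem _ fun j _ =>
      Submodule.smul_mem _ _ (hC i j)
  -- Step D : all of h_α
  have hU : ∀ u, Upos m u ∈ h' := by
    intro u
    have h1 := hstab u _ hH
    rw [bracket3 m 1 0 (by intro i j; simp) u] at h1
    have e : (fun i => -(1 * u i) - ∑ j, (0:Matrix (Fin m) (Fin m) ℝ) i j * u j)
        = (-1 : ℝ) • u := by funext i; simp
    rw [e, Upos_smul] at h1
    simpa using h'.smul_mem (-1) h1
  -- Step E : decompose an arbitrary element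
  intro M hM
  have key : ∀ p q : Idx m, (Mᵀ * lorJ m) p q + (lorJ m * M) p q = 0 := by
    intro p q
    have := congrFun (congrFun hM p) q
    simpa using this
  have kb : M (Sum.inl 0) (Sum.inr (Sum.inr 0)) = 0 := by
    have := key (Sum.inr (Sum.inr 0)) (Sum.inr (Sum.inr 0))
    simp [Matrix.mul_apply, Matrix.transpose_apply, lorJ, Fintype.sum_sum_type,
      Fin.sum_univ_one, mul_ite, mul_one, mul_zero, ite_mul, one_mul, zero_mul,
      Finset.sum_ite_eq, Finset.sum_ite_eq'] at this
    linarith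
  have kc : M (Sum.inr (Sum.inr 0)) (Sum.inl 0) = 0 := by
    have := key (Sum.inl 0) (Sum.inl 0)
    simp [Matrix.mul_apply, Matrix.transpose_apply, lorJ, Fintype.sum_sum_type,
      Fin.sum_univ_one, mul_ite, mul_one, mul_zero, ite_mul, one_mul, zero_mul,
      Finset.sum_ite_eq, Finset.sum_ite_eq'] at this
    linarith
  have kd : M (Sum.inr (Sum.inr 0)) (Sum.inr (Sum.inr 0)) = -M (Sum.inl 0) (Sum.inl 0) := by
    have := key (Sum.inl 0) (Sum.inr (Sum.inr 0))
    simp [Matrix.mul_apply, Matrix.transpose_apply, lorJ, Fintype.sum_sum_type,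
      Fin.sum_univ_one, mul_ite, mul_one, mul_zero, ite_mul, one_mul, zero_mul,
      Finset.sum_ite_eq, Finset.sum_ite_eq'] at this
    linarith
  have ku : ∀ x : Fin m,
      M (Sum.inr (Sum.inl x)) (Sum.inr (Sum.inr 0)) = -M (Sum.inl 0) (Sum.inr (Sum.inl x)) := by
    intro x
    have := key (Sum.inr (Sum.inl x)) (Sum.inr (Sum.inr 0))
    simp [Matrix.mul_apply, Matrix.transpose_apply, lorJ, Fintype.sum_sum_type,
      Fin.sum_univ_one, mul_ite, mul_one, mul_zero, ite_mul, one_mul, zero_mul,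
      Finset.sum_ite_eq, Finset.sum_ite_eq'] at this
    linarith
  have kw : ∀ x : Fin m,
      M (Sum.inr (Sum.inr 0)) (Sum.inr (Sum.inl x)) = -M (Sum.inr (Sum.inl x)) (Sum.inl 0) := by
    intro x
    have := key (Sum.inl 0) (Sum.inr (Sum.inl x))
    simp [Matrix.mul_apply, Matrix.transpose_apply, lorJ, Fintype.sum_sum_type,
      Fin.sum_univ_one, mul_ite, mul_one, mul_zero, ite_mul, one_mul, zero_mul,
      Finset.sum_ite_eq, Finset.sum_ite_eq'] at this
    linarith
  have kA : ∀ x y : Fin m,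
      M (Sum.inr (Sum.inl y)) (Sum.inr (Sum.inl x)) = -M (Sum.inr (Sum.inl x)) (Sum.inr (Sum.inl y)) := by
    intro x y
    have := key (Sum.inr (Sum.inl x)) (Sum.inr (Sum.inl y))
    simp [Matrix.mul_apply, Matrix.transpose_apply, lorJ, Fintype.sum_sum_type,
      Fin.sum_univ_one, mul_ite, mul_one, mul_zero, ite_mul, one_mul, zero_mul,
      Finset.sum_ite_eq, Finset.sum_ite_eq'] at this
    linarith
  have hdec : M = (M (Sum.inl 0) (Sum.inl 0)) • Dmat m 1 0
      + Dmat m 0 (fun i j => M (Sum.inr (Sum.inl i)) (Sum.inr (Sum.inl j)))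
      + Upos m (fun j => M (Sum.inl 0) (Sum.inr (Sum.inl j)))
      + Yneg m (fun i => -(M (Sum.inr (Sum.inl i)) (Sum.inl 0))) := by
    ext p q
    rcases p with p | p | p <;> rcases q with q | q | q <;>
      (try obtain rfl : p = (0:Fin 1) := Subsingleton.elim p 0) <;>
      (try obtain rfl : q = (0:Fin 1) := Subsingleton.elim q 0) <;>
      simp [Dmat, Upos, Yneg, Matrix.add_apply, Matrix.smul_apply, kb, kc, kd, ku, kw]
  rw [hdec]
  exact h'.add_mem (h'.add_mem (h'.add_mem (h'.smul_mem _ hH)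
    (hMid _ fun i j => kA i j)) (hU _)) (hY _)
end
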